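/- Let t₀ ≥ 1, Φ : ℂ → ℝ satisfy |Φ(z)-Φ(w)| ≤ C₀|z-w| for all z,w ∈ ℂ, and J : [t₀,∞) → ℂ satisfy |J(t)| ≤ E₀ t^{-1-λ} with C₀, E₀, λ > 0. Let z : [t₀,∞) → ℂ be a C¹ solution of i z'(t) = Φ(z(t)) z(t)/t + J(t). If C₀(E₀ t₀^{-λ} + |z(t₀)| λ) < λ², then there exists a C¹ function p : [log t₀, ∞) → ℂ satisfying i p'(s) = Φ(p(s)) p(s) and |z(t) - p(log t)| ≤ E₀ λ / ({λ² - C₀(E₀ t₀^{-λ} + |z(t₀)|λ)} t^λ) for all t ≥ t₀. -/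

import Mathlib

open Filter MeasureTheory Set Topology intervalIntegral

/-- Lipschitz bound for `x ↦ exp (x*I)`. -/
lemma cexp_lip (x y : ℝ) :
    ‖Complex.exp (x * Complex.I) - Complex.exp (y * Complex.I)‖ ≤ |x - y| := by
  have hd : ∀ t : ℝ, HasDerivAt (fun t : ℝ => Complex.exp ((t : ℂ) * Complex.I))
      (Complex.exp ((t : ℂ) * Complex.I) * Complex.I) t := by
    intro t
    have h1 : HasDerivAt (fun t : ℝ => (t : ℂ) * Complex.I) Complex.I t := by
      simpa using ((hasDerivAt_id t).ofReal_comp (z := t)).mul_const Complex.I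
    simpa using h1.cexp
  have := Convex.norm_image_sub_le_of_norm_hasDerivWithin_le
    (f := fun t : ℝ => Complex.exp ((t : ℂ) * Complex.I))
    (f' := fun t : ℝ => Complex.exp ((t : ℂ) * Complex.I) * Complex.I)
    (C := 1) (s := univ)
    (fun t _ => (hd t).hasDerivWithinAt)
    (fun t _ => by
      rw [norm_mul, Complex.norm_exp_ofReal_mul_I, Complex.norm_I, mul_one])
    convex_univ (mem_univ y) (mem_univ x)
  simpa [Real.norm_eq_abs] using this

/-- One-sided FTC-style bound with exponential bound on the derivative. -/
lemma decay_bound {E : Type*} [NormedAddCommGroup E] [NormedSpace ℝ E]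
    {f f' : ℝ → E} {a b c l : ℝ} (hab : a ≤ b) (hl : 0 < l) (hc : 0 ≤ c)
    (hcont : ContinuousOn f (Icc a b))
    (hder : ∀ x ∈ Ico a b, HasDerivWithinAt f (f' x) (Ici x) x)
    (hbd : ∀ x ∈ Ico a b, ‖f' x‖ ≤ c * Real.exp (-l * x)) :
    ‖f b - f a‖ ≤ c / l * (Real.exp (-l * a) - Real.exp (-l * b)) := by
  have hB : ∀ x : ℝ, HasDerivAt (fun x => c / l * (Real.exp (-l * a) - Real.exp (-l * x)))
      (c * Real.exp (-l * x)) x := by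
    intro x
    have h1 : HasDerivAt (fun x : ℝ => Real.exp (-l * x)) (Real.exp (-l * x) * (-l)) x := by
      have h0 : HasDerivAt (fun x : ℝ => -l * x) (-l) x := by
        simpa using (hasDerivAt_id x).const_mul (-l)
      exact (Real.hasDerivAt_exp _).comp x h0
    have h2 := ((hasDerivAt_const x (Real.exp (-l * a))).sub h1).const_mul (c / l)
    refine h2.congr_deriv ?_
    rw [div_mul_eq_mul_div, div_eq_iff hl.ne']
    ring
  have key := image_norm_le_of_norm_deriv_right_le_deriv_boundary
    (f := fun x => f x - f a) (f' := f')
    (hcont.sub continuousOn_const)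
    (fun x hx => (hder x hx).sub_const (f a))
    (B := fun x => c / l * (Real.exp (-l * a) - Real.exp (-l * x)))
    (B' := fun x => c * Real.exp (-l * x))
    (by simp) hB hbd
  exact key (right_mem_Icc.2 hab)

lemma integral_exp_decay (l : ℝ) (hl : 0 < l) (s : ℝ) :
    ∫ σ in Ioi s, Real.exp (-l * σ) = Real.exp (-l * s) / l := by
  have hderiv : ∀ x ∈ Ici s, HasDerivAt (fun x => -(Real.exp (-l * x)) / l)
      (Real.exp (-l * x)) x := by
    intro x _
    have h0 : HasDerivAt (fun x : ℝ => -l * x) (-l) x := by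
      simpa using (hasDerivAt_id x).const_mul (-l)
    have h1 : HasDerivAt (fun x : ℝ => Real.exp (-l * x)) (Real.exp (-l * x) * (-l)) x := by
      simpa [mul_comm] using h0.exp
    refine (h1.neg).div_const l |>.congr_deriv ?_
    rw [div_eq_iff hl.ne']
    ring
  have htend : Tendsto (fun x => -(Real.exp (-l * x)) / l) atTop (𝓝 0) := by
    have h2 : Tendsto (fun x : ℝ => Real.exp (-l * x)) atTop (𝓝 0) := by
      have h2a : Tendsto (fun x : ℝ => l * x) atTop atTop := tendsto_id.const_mul_atTop hl
      have := Real.tendsto_exp_neg_atTop_nhds_zero.comp h2a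
      simpa [Function.comp_def, neg_mul] using this
    simpa using (h2.neg).div_const l
  have := MeasureTheory.integral_Ioi_of_hasDerivAt_of_tendsto
    (f := fun x => -(Real.exp (-l * x)) / l) (f' := fun x => Real.exp (-l * x))
    ((hderiv s (self_mem_Ici)).continuousAt.continuousWithinAt)
    (fun x hx => hderiv x (mem_Ici.2 (le_of_lt hx))) (exp_neg_integrableOn_Ioi s hl) htend
  rw [this]
  field_simp
  ring

lemma fp_lemma (l μ c : ℝ) (hl : 0 < l) (hμ0 : 0 ≤ μ) (hμl : μ < l) (hc : 0 ≤ c)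
    (h : ℝ → ℝ → ℝ) (hcont : Continuous fun p : ℝ × ℝ => h p.1 p.2)
    (hlip : ∀ σ x y, |h σ x - h σ y| ≤ μ * |x - y|)
    (hbd : ∀ σ, |h σ 0| ≤ c * Real.exp (-l * σ)) :
    ∃ u : ℝ → ℝ, (∀ s, HasDerivAt u (h s (u s)) s) ∧
      ∀ c' s₁, 0 ≤ c' → (∀ σ, s₁ ≤ σ → |h σ 0| ≤ c' * Real.exp (-l * σ)) →
        ∀ s, s₁ ≤ s → |u s| ≤ c' / (l - μ) * Real.exp (-l * s) := by
  classical
  set X := BoundedContinuousFunction ℝ ℝ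
  -- the integrand associated to `v`
  set fv : X → ℝ → ℝ := fun v σ => h σ (Real.exp (-l * σ) * v σ) with hfv_def
  have hfvc : ∀ v : X, Continuous (fv v) := by
    intro v
    exact hcont.comp (continuous_id.prodMk
      ((Real.continuous_exp.comp (continuous_const.mul continuous_id)).mul v.continuous))
  have hfvb : ∀ (v : X) σ, |fv v σ| ≤ (c + μ * ‖v‖) * Real.exp (-l * σ) := by
    intro v σ
    have h1 : |fv v σ - h σ 0| ≤ μ * |Real.exp (-l * σ) * v σ - 0| := hlip σ _ 0
    have h2 : |Real.exp (-l * σ) * v σ - 0| ≤ Real.exp (-l * σ) * ‖v‖ := by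
      rw [sub_zero, abs_mul, abs_of_pos (Real.exp_pos _)]
      exact mul_le_mul_of_nonneg_left (v.norm_coe_le_norm σ) (Real.exp_pos _).le
    have h3 := hbd σ
    have h4 : |fv v σ| ≤ |fv v σ - h σ 0| + |h σ 0| := by
      calc |fv v σ| = |(fv v σ - h σ 0) + h σ 0| := by ring_nf
        _ ≤ _ := abs_add_le _ _
    have h5 : μ * |Real.exp (-l * σ) * v σ - 0| ≤ μ * (Real.exp (-l * σ) * ‖v‖) :=
      mul_le_mul_of_nonneg_left h2 hμ0
    nlinarith [Real.exp_pos (-l * σ)]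
  have hfvi : ∀ (v : X) s, IntegrableOn (fv v) (Ioi s) := by
    intro v s
    refine Integrable.mono' ((exp_neg_integrableOn_Ioi s hl).const_mul (c + μ * ‖v‖))
      ((hfvc v).aestronglyMeasurable.restrict) ?_
    exact Filter.Eventually.of_forall fun σ => by
      simpa [Real.norm_eq_abs] using hfvb v σ
  set gv : X → ℝ → ℝ := fun v s => ∫ σ in Ioi s, fv v σ with hgv_def
  have hsplit : ∀ (v : X) (x r : ℝ), x ≤ r →
      gv v x = (∫ σ in x..r, fv v σ) + gv v r := by
    intro v x r hxr
    rw [intervalIntegral.integral_of_le hxr, hgv_def]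
    rw [← MeasureTheory.setIntegral_union (Ioc_disjoint_Ioi le_rfl) measurableSet_Ioi
      ((hfvi v x).mono_set Ioc_subset_Ioi_self) (hfvi v r), Ioc_union_Ioi_eq_Ioi hxr]
  have hgd : ∀ (v : X) s, HasDerivAt (gv v) (-(fv v s)) s := by
    intro v s
    have hleft : HasDerivAt (fun x => (∫ σ in x..(s + 1), fv v σ) + gv v (s + 1))
        (-(fv v s)) s := by
      simpa using (intervalIntegral.integral_hasDerivAt_left
        ((hfvc v).intervalIntegrable _ _)
        ((hfvc v).stronglyMeasurableAtFilter _ _) (hfvc v).continuousAt).add_const (gv v (s + 1))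
    apply hleft.congr_of_eventuallyEq
    filter_upwards [Iio_mem_nhds (lt_add_one s)] with x hx
    exact hsplit v x (s + 1) (le_of_lt hx)
  have hgb : ∀ (v : X) s, |gv v s| ≤ (c + μ * ‖v‖) * (Real.exp (-l * s) / l) := by
    intro v s
    have h1 : ‖∫ σ in Ioi s, fv v σ‖ ≤ ∫ σ in Ioi s, (c + μ * ‖v‖) * Real.exp (-l * σ) := by
      refine MeasureTheory.norm_integral_le_of_norm_le
        (((exp_neg_integrableOn_Ioi s hl).const_mul (c + μ * ‖v‖)))
        (Filter.Eventually.of_forall fun σ => by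
          simpa [Real.norm_eq_abs] using hfvb v σ)
    rw [MeasureTheory.integral_const_mul, integral_exp_decay l hl s] at h1
    simpa [Real.norm_eq_abs] using h1
  -- the contraction
  set Sc : X → X := fun v => BoundedContinuousFunction.ofNormedAddCommGroup
      (fun s => -(Real.exp (l * s) * gv v s))
      (by
        have hgc : Continuous (gv v) := by
          rw [continuous_iff_continuousAt]; exact fun s => (hgd v s).continuousAt
        exact ((Real.continuous_exp.comp (continuous_const.mul continuous_id)).mul hgc).neg)
      ((c + μ * ‖v‖) / l)
      (by
        intro s
        rw [norm_neg, Real.norm_eq_abs, abs_mul, abs_of_pos (Real.exp_pos _)]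
        calc Real.exp (l * s) * |gv v s|
            ≤ Real.exp (l * s) * ((c + μ * ‖v‖) * (Real.exp (-l * s) / l)) :=
              mul_le_mul_of_nonneg_left (hgb v s) (Real.exp_pos _).le
          _ = (c + μ * ‖v‖) / l * (Real.exp (l * s) * Real.exp (-l * s)) := by ring
          _ = (c + μ * ‖v‖) / l := by rw [← Real.exp_add]; simp) with hSc_def
  have hSc_apply : ∀ (v : X) s, Sc v s = -(Real.exp (l * s) * gv v s) := fun v s => rfl
  have hdistp : ∀ (v₁ v₂ : X) (s : ℝ), |Sc v₁ s - Sc v₂ s| ≤ μ / l * dist v₁ v₂ := by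
    intro v₁ v₂ s
    have hsub : gv v₁ s - gv v₂ s = ∫ σ in Ioi s, (fv v₁ σ - fv v₂ σ) :=
      (MeasureTheory.integral_sub (hfvi v₁ s) (hfvi v₂ s)).symm
    have h1 : ‖∫ σ in Ioi s, (fv v₁ σ - fv v₂ σ)‖
        ≤ ∫ σ in Ioi s, (μ * dist v₁ v₂) * Real.exp (-l * σ) := by
      refine MeasureTheory.norm_integral_le_of_norm_le
        ((exp_neg_integrableOn_Ioi s hl).const_mul (μ * dist v₁ v₂))
        (Filter.Eventually.of_forall fun σ => ?_)
      have h2 : |fv v₁ σ - fv v₂ σ| ≤ μ * |Real.exp (-l * σ) * v₁ σ - Real.exp (-l * σ) * v₂ σ| :=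
        hlip σ _ _
      have h3 : |Real.exp (-l * σ) * v₁ σ - Real.exp (-l * σ) * v₂ σ|
          = Real.exp (-l * σ) * |v₁ σ - v₂ σ| := by
        rw [← mul_sub, abs_mul, abs_of_pos (Real.exp_pos _)]
      have h4 : |v₁ σ - v₂ σ| ≤ dist v₁ v₂ := by
        rw [← Real.dist_eq]; exact BoundedContinuousFunction.dist_coe_le_dist σ
      rw [Real.norm_eq_abs]
      calc |fv v₁ σ - fv v₂ σ| ≤ μ * (Real.exp (-l * σ) * |v₁ σ - v₂ σ|) := by rw [← h3]; exact h2
        _ ≤ μ * (Real.exp (-l * σ) * dist v₁ v₂) := by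
            exact mul_le_mul_of_nonneg_left
              (mul_le_mul_of_nonneg_left h4 (Real.exp_pos _).le) hμ0
        _ = μ * dist v₁ v₂ * Real.exp (-l * σ) := by ring
    rw [MeasureTheory.integral_const_mul, integral_exp_decay l hl s] at h1
    have heq : Sc v₁ s - Sc v₂ s = Real.exp (l * s) * (gv v₂ s - gv v₁ s) := by
      rw [hSc_apply, hSc_apply]; ring
    rw [heq, abs_mul, abs_of_pos (Real.exp_pos _), abs_sub_comm, hsub]
    calc Real.exp (l * s) * |∫ σ in Ioi s, (fv v₁ σ - fv v₂ σ)|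
        ≤ Real.exp (l * s) * (μ * dist v₁ v₂ * (Real.exp (-l * s) / l)) := by
          refine mul_le_mul_of_nonneg_left ?_ (Real.exp_pos _).le
          simpa [Real.norm_eq_abs] using h1
      _ = μ / l * dist v₁ v₂ * (Real.exp (l * s) * Real.exp (-l * s)) := by ring
      _ = μ / l * dist v₁ v₂ := by rw [← Real.exp_add]; simp
  have hlips : LipschitzWith (Real.toNNReal (μ / l)) Sc := by
    apply LipschitzWith.of_dist_le_mul
    intro v₁ v₂
    rw [Real.coe_toNNReal _ (div_nonneg hμ0 hl.le)]
    refine (BoundedContinuousFunction.dist_le (by positivity)).mpr fun s => ?_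
    rw [Real.dist_eq]
    exact hdistp v₁ v₂ s
  have hK1 : Real.toNNReal (μ / l) < 1 := by
    have : μ / l < 1 := (div_lt_one hl).2 hμl
    simpa using Real.toNNReal_lt_one.2 this
  have hContr : ContractingWith (Real.toNNReal (μ / l)) Sc := ⟨hK1, hlips⟩
  set vs : X := ContractingWith.fixedPoint Sc hContr with hvs_def
  have hfix : Sc vs = vs := ContractingWith.fixedPoint_isFixedPt hContr
  set u : ℝ → ℝ := fun s => Real.exp (-l * s) * vs s with hu_def
  have hueq : ∀ s, u s = -(gv vs s) := by
    intro s
    have h1 : Sc vs s = vs s := by rw [hfix]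
    rw [hSc_apply] at h1
    rw [hu_def]
    simp only
    rw [← h1]
    rw [show Real.exp (-l * s) * -(Real.exp (l * s) * gv vs s)
      = -((Real.exp (-l * s) * Real.exp (l * s)) * gv vs s) by ring, ← Real.exp_add]
    simp
  have hfvu : ∀ σ, fv vs σ = h σ (u σ) := fun σ => rfl
  have hu' : ∀ s, HasDerivAt u (h s (u s)) s := by
    intro s
    have h1 : HasDerivAt (fun x => -(gv vs x)) (fv vs s) s := (hgd vs s).neg.congr_deriv (neg_neg _)
    have h2 : u = fun x => -(gv vs x) := funext hueq
    rw [h2]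
    have h3 : fv vs s = h s ((fun x => -(gv vs x)) s) := by
      show fv vs s = h s (-(gv vs s))
      rw [← hueq s, hfvu s]
    rw [← h3]
    exact h1
  refine ⟨u, hu', ?_⟩
  intro c' s₁ hc' hb' s hs
  -- weighted sup over [s₁, ∞)
  have hbdd : BddAbove (range fun σ : Ici s₁ => Real.exp (l * (σ : ℝ)) * |u σ|) := by
    refine ⟨‖vs‖, ?_⟩
    rintro x ⟨⟨σ, hσ⟩, rfl⟩
    simp only
    have : Real.exp (l * σ) * |u σ| = |vs σ| := by
      rw [hu_def]
      simp only
      rw [abs_mul, abs_of_pos (Real.exp_pos _),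
        show Real.exp (l * σ) * (Real.exp (-l * σ) * |vs σ|)
          = (Real.exp (l * σ) * Real.exp (-l * σ)) * |vs σ| by ring, ← Real.exp_add]
      simp
    rw [this, ← Real.norm_eq_abs]
    exact vs.norm_coe_le_norm σ
  have hne : Nonempty (Ici s₁) := ⟨⟨s₁, self_mem_Ici⟩⟩
  set N : ℝ := ⨆ σ : Ici s₁, Real.exp (l * (σ : ℝ)) * |u σ| with hN_def
  have hNle : ∀ σ, s₁ ≤ σ → |u σ| ≤ N * Real.exp (-l * σ) := by
    intro σ hσ
    have h1 : Real.exp (l * σ) * |u σ| ≤ N := le_ciSup hbdd ⟨σ, hσ⟩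
    have h2 := mul_le_mul_of_nonneg_right h1 (Real.exp_pos (-l * σ)).le
    calc |u σ| = Real.exp (l * σ) * |u σ| * Real.exp (-l * σ) := by
          rw [show Real.exp (l * σ) * |u σ| * Real.exp (-l * σ)
            = (Real.exp (l * σ) * Real.exp (-l * σ)) * |u σ| by ring, ← Real.exp_add]
          simp
      _ ≤ N * Real.exp (-l * σ) := h2
  have hN0 : 0 ≤ N := le_trans (by positivity) (le_ciSup hbdd ⟨s₁, self_mem_Ici⟩)
  have key : ∀ x, s₁ ≤ x → Real.exp (l * x) * |u x| ≤ (c' + μ * N) / l := by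
    intro x hx
    have h1 : ‖∫ σ in Ioi x, fv vs σ‖ ≤ ∫ σ in Ioi x, (c' + μ * N) * Real.exp (-l * σ) := by
      refine MeasureTheory.norm_integral_le_of_norm_le
        ((exp_neg_integrableOn_Ioi x hl).const_mul (c' + μ * N)) ?_
      rw [ae_restrict_iff' measurableSet_Ioi]
      refine Filter.Eventually.of_forall fun σ hσ => ?_
      have hσ₁ : s₁ ≤ σ := le_trans hx (le_of_lt hσ)
      have h2 : |h σ (u σ) - h σ 0| ≤ μ * |u σ - 0| := hlip σ _ 0
      have h3 : |h σ (u σ)| ≤ |h σ (u σ) - h σ 0| + |h σ 0| := by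
        calc |h σ (u σ)| = |(h σ (u σ) - h σ 0) + h σ 0| := by ring_nf
          _ ≤ _ := abs_add_le _ _
      have h4 := hb' σ hσ₁
      have h5 : μ * |u σ - 0| ≤ μ * (N * Real.exp (-l * σ)) := by
        rw [sub_zero]
        exact mul_le_mul_of_nonneg_left (hNle σ hσ₁) hμ0
      rw [hfvu σ, Real.norm_eq_abs]
      nlinarith
    rw [MeasureTheory.integral_const_mul, integral_exp_decay l hl x] at h1
    have h6 : |u x| ≤ (c' + μ * N) * (Real.exp (-l * x) / l) := by
      rw [hueq x, abs_neg]
      simpa [Real.norm_eq_abs] using h1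
    calc Real.exp (l * x) * |u x| ≤ Real.exp (l * x) * ((c' + μ * N) * (Real.exp (-l * x) / l)) :=
          mul_le_mul_of_nonneg_left h6 (Real.exp_pos _).le
      _ = (c' + μ * N) / l * (Real.exp (l * x) * Real.exp (-l * x)) := by ring
      _ = (c' + μ * N) / l := by rw [← Real.exp_add]; simp
  have hNle2 : N ≤ (c' + μ * N) / l := ciSup_le fun ⟨x, hx⟩ => key x hx
  have hNfin : N ≤ c' / (l - μ) := by
    rw [le_div_iff₀ hl] at hNle2
    rw [le_div_iff₀ (by linarith : (0:ℝ) < l - μ)]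
    nlinarith
  calc |u s| ≤ N * Real.exp (-l * s) := hNle s hs
    _ ≤ c' / (l - μ) * Real.exp (-l * s) :=
        mul_le_mul_of_nonneg_right hNfin (Real.exp_pos _).le

set_option maxHeartbeats 1600000 in
open Real in
/-- If z solves i z' = Φ(z)z/t + J with Φ real-valued and
C₀-Lipschitz, |J(t)| ≤ E₀t^{-1-λ}, and C₀(E₀t₀^{-λ} + |z(t₀)|λ) < λ², then there
is a C¹ profile p with i p' = Φ(p)p and
|z(t) - p(log t)| ≤ E₀λ/({λ² - C₀(E₀t₀^{-λ} + |z(t₀)|λ)}t^λ). -/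
theorem stmt7 (t₀ C₀ E₀ lam : ℝ) (ht₀ : 1 ≤ t₀) (hC₀ : 0 < C₀) (hE₀ : 0 < E₀)
    (hlam : 0 < lam)
    (Φ : ℂ → ℝ) (hΦ : ∀ z w : ℂ, |Φ z - Φ w| ≤ C₀ * ‖z - w‖)
    (J : ℝ → ℂ) (hJ : ∀ t ≥ t₀, ‖J t‖ ≤ E₀ * t ^ (-1 - lam))
    (z : ℝ → ℂ)
    (hz : ∀ t ≥ t₀, HasDerivAt z
      (-Complex.I * (((Φ (z t) : ℝ) : ℂ) * z t / (t : ℂ) + J t)) t)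
    (hsmall : C₀ * (E₀ * t₀ ^ (-lam) + ‖z t₀‖ * lam) < lam ^ 2) :
    ∃ p : ℝ → ℂ,
      (∀ s ≥ Real.log t₀,
        HasDerivAt p (-Complex.I * (((Φ (p s) : ℝ) : ℂ) * p s)) s) ∧
      (∀ t ≥ t₀, ‖z t - p (Real.log t)‖ ≤
        E₀ * lam /
          ((lam ^ 2 - C₀ * (E₀ * t₀ ^ (-lam) + ‖z t₀‖ * lam)) * t ^ lam)) := by
  have ht₀0 : (0:ℝ) < t₀ := lt_of_lt_of_le one_pos ht₀
  set s₀ := Real.log t₀ with hs₀_def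
  have hexps₀ : Real.exp s₀ = t₀ := Real.exp_log ht₀0
  set w : ℝ → ℂ := fun s => z (Real.exp (max s s₀)) with hw_def
  have hexp_ge : ∀ s : ℝ, t₀ ≤ Real.exp (max s s₀) := fun s => by
    rw [← hexps₀]; exact Real.exp_le_exp.2 (le_max_right _ _)
  have hw_eq : ∀ s, s₀ ≤ s → w s = z (Real.exp s) := fun s hs => by
    rw [hw_def]; simp only [max_eq_left hs]
  have hw_cont : Continuous w := by
    rw [continuous_iff_continuousAt]
    intro s
    have h1 : ContinuousAt (fun s : ℝ => Real.exp (max s s₀)) s :=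
      (Real.continuous_exp.comp (continuous_id.max continuous_const)).continuousAt
    have h2 := ContinuousAt.comp (x := s) (g := z) (f := fun s => Real.exp (max s s₀))
      (hz _ (hexp_ge s)).continuousAt h1
    simpa [Function.comp_def, hw_def] using h2
  have hΦc : Continuous Φ := by
    have hlw : LipschitzWith (Real.toNNReal C₀) Φ := by
      apply LipschitzWith.of_dist_le_mul
      intro a b
      rw [Real.coe_toNNReal _ hC₀.le, Real.dist_eq, Complex.dist_eq]
      exact hΦ a b
    exact hlw.continuous
  set θ : ℝ → ℝ := fun s => ∫ σ in s₀..s, Φ (w σ) with hθ_def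
  have hθc : Continuous fun σ => Φ (w σ) := hΦc.comp hw_cont
  have hθd : ∀ s, HasDerivAt θ (Φ (w s)) s := fun s =>
    intervalIntegral.integral_hasDerivAt_right (hθc.intervalIntegrable _ _)
      (hθc.stronglyMeasurableAtFilter _ _) hθc.continuousAt
  have hθcont : Continuous θ := by
    rw [continuous_iff_continuousAt]; exact fun s => (hθd s).continuousAt
  set q : ℝ → ℂ := fun s => Complex.exp ((θ s : ℂ) * Complex.I) * w s with hq_def
  have hq_cont : Continuous q :=
    (Complex.continuous_exp.comp
      ((Complex.continuous_ofReal.comp hθcont).mul continuous_const)).mul hw_cont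
  have hq_deriv : ∀ s, s₀ ≤ s → HasDerivWithinAt q
      (Complex.exp ((θ s : ℂ) * Complex.I) * (-Complex.I) *
        ((Real.exp s : ℂ) * J (Real.exp s))) (Ici s₀) s := by
    intro s hs
    have hts : t₀ ≤ Real.exp s := by rw [← hexps₀]; exact Real.exp_le_exp.2 hs
    have hzc := hz (Real.exp s) hts
    have hcomp : HasDerivAt (fun x : ℝ => z (Real.exp x))
        (Real.exp s • (-Complex.I * (((Φ (z (Real.exp s)) : ℝ) : ℂ) * z (Real.exp s)
          / ((Real.exp s : ℝ) : ℂ) + J (Real.exp s)))) s := by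
      simpa [Function.comp_def] using hzc.scomp s (Real.hasDerivAt_exp s)
    have hw' : HasDerivWithinAt w
        (Real.exp s • (-Complex.I * (((Φ (z (Real.exp s)) : ℝ) : ℂ) * z (Real.exp s)
          / ((Real.exp s : ℝ) : ℂ) + J (Real.exp s)))) (Ici s₀) s :=
      (hcomp.hasDerivWithinAt).congr (fun x hx => hw_eq x hx) (hw_eq s hs)
    have hE : HasDerivWithinAt (fun s => Complex.exp ((θ s : ℂ) * Complex.I))
        (Complex.exp ((θ s : ℂ) * Complex.I) * (((Φ (w s) : ℝ) : ℂ) * Complex.I))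
        (Ici s₀) s := (((hθd s).ofReal_comp).mul_const Complex.I).cexp.hasDerivWithinAt
    have hprod := hE.mul hw'
    refine HasDerivWithinAt.congr_deriv hprod ?_
    rw [hw_eq s hs]
    have hexpne : ((Real.exp s : ℝ) : ℂ) ≠ 0 := by
      exact_mod_cast (Real.exp_pos s).ne'
    rw [Complex.real_smul]
    field_simp
    ring
  have hq_norm : ∀ x, s₀ ≤ x → ‖Complex.exp ((θ x : ℂ) * Complex.I) * (-Complex.I) *
      ((Real.exp x : ℂ) * J (Real.exp x))‖ ≤ E₀ * Real.exp (-lam * x) := by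
    intro x hx
    have htx : t₀ ≤ Real.exp x := by rw [← hexps₀]; exact Real.exp_le_exp.2 hx
    have hJx := hJ (Real.exp x) htx
    have h1 : ‖Complex.exp ((θ x : ℂ) * Complex.I) * (-Complex.I) *
        ((Real.exp x : ℂ) * J (Real.exp x))‖
        = Real.exp x * ‖J (Real.exp x)‖ := by
      rw [norm_mul, norm_mul, norm_mul, Complex.norm_exp_ofReal_mul_I]
      simp [abs_of_pos (Real.exp_pos x)]
    rw [h1]
    have h2 : (Real.exp x) ^ (-1 - lam) = Real.exp (x * (-1 - lam)) := by
      rw [Real.rpow_def_of_pos (Real.exp_pos x), Real.log_exp]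
    calc Real.exp x * ‖J (Real.exp x)‖
        ≤ Real.exp x * (E₀ * (Real.exp x) ^ (-1 - lam)) :=
          mul_le_mul_of_nonneg_left hJx (Real.exp_pos x).le
      _ = E₀ * (Real.exp x * Real.exp (x * (-1 - lam))) := by rw [h2]; ring
      _ = E₀ * Real.exp (-lam * x) := by rw [← Real.exp_add]; ring_nf
  have claim2 : ∀ a b, s₀ ≤ a → a ≤ b →
      ‖q b - q a‖ ≤ E₀ / lam * Real.exp (-lam * a) := by
    intro a b ha hab
    have h0 := decay_bound (f := q)
      (f' := fun x => Complex.exp ((θ x : ℂ) * Complex.I) * (-Complex.I) *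
        ((Real.exp x : ℂ) * J (Real.exp x)))
      hab hlam hE₀.le hq_cont.continuousOn
      (fun x hx => (hq_deriv x (le_trans ha hx.1)).mono (Ici_subset_Ici.mpr (le_trans ha hx.1)))
      (fun x hx => hq_norm x (le_trans ha hx.1))
    calc ‖q b - q a‖ ≤ E₀ / lam * (Real.exp (-lam * a) - Real.exp (-lam * b)) := h0
      _ ≤ E₀ / lam * Real.exp (-lam * a) := by
          have := Real.exp_pos (-lam * b)
          have hEl : 0 ≤ E₀ / lam := by positivity
          nlinarith
  -- limit q∞
  set qs : ℕ → ℂ := fun n => q (s₀ + n) with hqs_def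
  have hqs_cauchy : CauchySeq qs := by
    apply cauchySeq_of_le_tendsto_0 (fun N : ℕ => E₀ / lam * Real.exp (-lam * (s₀ + N)))
    · intro n m N hn hm
      have hEl : 0 ≤ E₀ / lam := by positivity
      have key : ∀ i j : ℕ, i ≤ j → N ≤ i →
          dist (qs i) (qs j) ≤ E₀ / lam * Real.exp (-lam * (s₀ + N)) := by
        intro i j hij hNi
        have h1 : dist (qs i) (qs j) = ‖q (s₀ + j) - q (s₀ + i)‖ := by
          rw [dist_comm, Complex.dist_eq]
        rw [h1]
        have h2 := claim2 (s₀ + i) (s₀ + j) (le_add_of_nonneg_right i.cast_nonneg)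
          (by have hc2 : (i:ℝ) ≤ j := by exact_mod_cast hij
              linarith)
        refine le_trans h2 ?_
        have h3 : Real.exp (-lam * (s₀ + i)) ≤ Real.exp (-lam * (s₀ + N)) := by
          apply Real.exp_le_exp.2
          have : (N : ℝ) ≤ i := by exact_mod_cast hNi
          nlinarith
        exact mul_le_mul_of_nonneg_left h3 hEl
      rcases le_total n m with hnm | hnm
      · exact key n m hnm hn
      · rw [dist_comm]; exact key m n hnm hm
    · have h1 : Tendsto (fun N : ℕ => (N : ℝ)) atTop atTop := tendsto_natCast_atTop_atTop
      have h2 : Tendsto (fun N : ℕ => lam * (s₀ + N)) atTop atTop :=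
        (tendsto_atTop_add_const_left _ s₀ h1).const_mul_atTop hlam
      have h3 : Tendsto (fun N : ℕ => Real.exp (-lam * (s₀ + N))) atTop (𝓝 0) := by
        have := Real.tendsto_exp_neg_atTop_nhds_zero.comp h2
        simpa [Function.comp_def, neg_mul] using this
      simpa using h3.const_mul (E₀ / lam)
  obtain ⟨qi, hqi⟩ := cauchySeq_tendsto_of_complete hqs_cauchy
  have hqinf : ∀ s, s₀ ≤ s → ‖q s - qi‖ ≤ E₀ / lam * Real.exp (-lam * s) := by
    intro s hs
    have h1 : Tendsto (fun n => ‖q s - qs n‖) atTop (𝓝 ‖q s - qi‖) :=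
      (tendsto_const_nhds.sub hqi).norm
    apply le_of_tendsto h1
    rw [Filter.eventually_atTop]
    refine ⟨Nat.ceil (s - s₀), fun n hn => ?_⟩
    have h2 : s ≤ s₀ + n := by
      have := Nat.ceil_le.1 hn
      linarith
    have h3 := claim2 s (s₀ + n) hs h2
    calc ‖q s - qs n‖ = ‖q (s₀ + n) - q s‖ := by
          rw [norm_sub_rev]
      _ ≤ E₀ / lam * Real.exp (-lam * s) := h3
  -- basic constants
  set R := ‖qi‖ with hR_def
  have hθs₀ : θ s₀ = 0 := by rw [hθ_def]; simp
  have hqs₀val : q s₀ = z t₀ := by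
    rw [hq_def]; simp only [hθs₀]
    rw [hw_eq s₀ le_rfl, hexps₀]
    simp
  have hes₀ : Real.exp (-lam * s₀) = t₀ ^ (-lam) := by
    rw [Real.rpow_def_of_pos ht₀0, ← hs₀_def]
    ring_nf
  set A := ‖z t₀‖ + E₀ * t₀ ^ (-lam) / lam with hA_def
  have hRA : R ≤ A := by
    have h1 := hqinf s₀ le_rfl
    rw [hqs₀val] at h1
    have h2 : ‖qi‖ - ‖z t₀‖ ≤ ‖z t₀ - qi‖ := by
      have := norm_sub_norm_le qi (z t₀)
      rw [norm_sub_rev] at this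
      linarith
    rw [hR_def, hA_def, ← hes₀]
    have h3 : E₀ / lam * Real.exp (-lam * s₀) = E₀ * Real.exp (-lam * s₀) / lam := by ring
    linarith [h1, h2]
  have hD : 0 < lam ^ 2 - C₀ * (E₀ * t₀ ^ (-lam) + ‖z t₀‖ * lam) := by
    linarith [hsmall]
  have hCA : C₀ * A < lam := by
    have hA_eq : A * lam = ‖z t₀‖ * lam + E₀ * t₀ ^ (-lam) := by
      rw [hA_def]
      field_simp
    by_contra hcon
    push_neg at hcon
    have h1 : lam * lam ≤ C₀ * A * lam :=
      mul_le_mul_of_nonneg_right (le_trans hcon le_rfl) hlam.le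
    rw [mul_assoc, hA_eq] at h1
    nlinarith [hsmall]
  set μ := C₀ * R with hμ_def
  have hμ0 : 0 ≤ μ := by
    rw [hμ_def, hR_def]; positivity
  have hμA : μ ≤ C₀ * A := by
    rw [hμ_def]; exact mul_le_mul_of_nonneg_left hRA hC₀.le
  have hμl : μ < lam := lt_of_le_of_lt hμA hCA
  -- uniform bound on w
  set M := R + E₀ / lam * Real.exp (-lam * s₀) with hM_def
  have hqw : ∀ σ, ‖q σ‖ = ‖w σ‖ := by
    intro σ
    rw [hq_def]
    simp only [norm_mul, Complex.norm_exp_ofReal_mul_I, one_mul]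
  have hwM : ∀ σ, ‖w σ‖ ≤ M := by
    intro σ
    have h1 : w σ = w (max σ s₀) := by
      rw [hw_def]; simp only [max_assoc, max_self]
    have h3 := hqinf (max σ s₀) (le_max_right _ _)
    have h4 : ‖q (max σ s₀)‖ - ‖qi‖ ≤ ‖q (max σ s₀) - qi‖ := norm_sub_norm_le _ _
    have h5 : Real.exp (-lam * max σ s₀) ≤ Real.exp (-lam * s₀) := by
      apply Real.exp_le_exp.2
      have := le_max_right σ s₀
      nlinarith
    have h6 : ‖w σ‖ = ‖q (max σ s₀)‖ := by
      rw [h1, hqw]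
    rw [h6, hM_def, hR_def]
    have hEl : 0 ≤ E₀ / lam := by positivity
    nlinarith
  -- the nonlinearity for the profile phase
  set hfun : ℝ → ℝ → ℝ := fun σ x =>
    Φ (Complex.exp (((-(θ σ + x) : ℝ) : ℂ) * Complex.I) * qi) - Φ (w σ) with hfun_def
  have hcont_h : Continuous fun pp : ℝ × ℝ => hfun pp.1 pp.2 := by
    apply Continuous.sub
    · apply hΦc.comp
      apply Continuous.mul _ continuous_const
      apply Complex.continuous_exp.comp
      apply Continuous.mul _ continuous_const
      exact Complex.continuous_ofReal.comp
        (((hθcont.comp continuous_fst).add continuous_snd).neg)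
    · exact hΦc.comp (hw_cont.comp continuous_fst)
  have hlip_h : ∀ σ x y, |hfun σ x - hfun σ y| ≤ μ * |x - y| := by
    intro σ x y
    have h1 : hfun σ x - hfun σ y
        = Φ (Complex.exp (((-(θ σ + x) : ℝ) : ℂ) * Complex.I) * qi)
          - Φ (Complex.exp (((-(θ σ + y) : ℝ) : ℂ) * Complex.I) * qi) := by
      rw [hfun_def]; ring
    rw [h1]
    refine le_trans (hΦ _ _) ?_
    rw [← sub_mul, norm_mul]
    have h2 := cexp_lip (-(θ σ + x)) (-(θ σ + y))
    have h3 : |(-(θ σ + x)) - (-(θ σ + y))| = |x - y| := by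
      rw [show (-(θ σ + x)) - (-(θ σ + y)) = -(x - y) by ring, abs_neg]
    rw [h3] at h2
    rw [hμ_def, hR_def]
    calc C₀ * (‖Complex.exp (((-(θ σ + x) : ℝ) : ℂ) * Complex.I)
          - Complex.exp (((-(θ σ + y) : ℝ) : ℂ) * Complex.I)‖ * ‖qi‖)
        ≤ C₀ * (|x - y| * ‖qi‖) := by
          refine mul_le_mul_of_nonneg_left
            (mul_le_mul_of_nonneg_right h2 (norm_nonneg qi)) hC₀.le
      _ = C₀ * ‖qi‖ * |x - y| := by ring
  have hq_fact : ∀ σ, w σ = Complex.exp (((-θ σ : ℝ) : ℂ) * Complex.I) * q σ := by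
    intro σ
    rw [hq_def]
    simp only
    rw [← mul_assoc, ← Complex.exp_add]
    push_cast
    rw [show -(θ σ : ℂ) * Complex.I + (θ σ : ℂ) * Complex.I = 0 by ring,
      Complex.exp_zero, one_mul]
  have hbd0 : ∀ σ, |hfun σ 0| ≤ C₀ * ‖q σ - qi‖ := by
    intro σ
    have h1 : hfun σ 0
        = Φ (Complex.exp (((-θ σ : ℝ) : ℂ) * Complex.I) * qi)
          - Φ (Complex.exp (((-θ σ : ℝ) : ℂ) * Complex.I) * q σ) := by
      rw [hfun_def]
      simp only [add_zero]
      rw [← hq_fact σ]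
    rw [h1]
    refine le_trans (hΦ _ _) ?_
    rw [← mul_sub, norm_mul]
    have h2 : ‖Complex.exp (((-θ σ : ℝ) : ℂ) * Complex.I)‖ = 1 :=
      Complex.norm_exp_ofReal_mul_I _
    rw [h2, one_mul, norm_sub_rev]
  set B₀ := R + M with hB₀_def
  have hqqiB : ∀ σ, ‖q σ - qi‖ ≤ B₀ := by
    intro σ
    have h1 : ‖q σ - qi‖ ≤ ‖q σ‖ + ‖qi‖ := norm_sub_le _ _
    have h2 := hwM σ
    rw [← hqw σ] at h2
    rw [hB₀_def, hR_def]
    linarith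
  set cg := max (C₀ * E₀ / lam) (C₀ * B₀ * Real.exp (lam * s₀)) with hcg_def
  have hB₀0 : 0 ≤ B₀ := by
    rw [hB₀_def, hM_def, hR_def]
    positivity
  have hcg0 : 0 ≤ cg := le_trans (by positivity) (le_max_left _ _)
  have hbd_s₀ : ∀ σ, s₀ ≤ σ → |hfun σ 0| ≤ C₀ * E₀ / lam * Real.exp (-lam * σ) := by
    intro σ hσ
    calc |hfun σ 0| ≤ C₀ * ‖q σ - qi‖ := hbd0 σ
      _ ≤ C₀ * (E₀ / lam * Real.exp (-lam * σ)) :=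
          mul_le_mul_of_nonneg_left (hqinf σ hσ) hC₀.le
      _ = C₀ * E₀ / lam * Real.exp (-lam * σ) := by ring
  have hbdg : ∀ σ, |hfun σ 0| ≤ cg * Real.exp (-lam * σ) := by
    intro σ
    rcases le_total s₀ σ with hσ | hσ
    · refine le_trans (hbd_s₀ σ hσ) ?_
      exact mul_le_mul_of_nonneg_right (le_max_left _ _) (Real.exp_pos _).le
    · have h1 : |hfun σ 0| ≤ C₀ * B₀ :=
        le_trans (hbd0 σ) (mul_le_mul_of_nonneg_left (hqqiB σ) hC₀.le)
      have h2 : (1:ℝ) ≤ Real.exp (lam * s₀) * Real.exp (-lam * σ) := by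
        rw [← Real.exp_add, ← Real.exp_zero]
        exact Real.exp_le_exp.2 (by nlinarith)
      have h3 : C₀ * B₀ ≤ (C₀ * B₀ * Real.exp (lam * s₀)) * Real.exp (-lam * σ) := by
        nlinarith [mul_nonneg hC₀.le hB₀0]
      refine le_trans h1 (le_trans h3 ?_)
      exact mul_le_mul_of_nonneg_right (le_max_right _ _) (Real.exp_pos _).le
  -- apply the fixed point lemma
  obtain ⟨u, hu', hubd⟩ := fp_lemma lam μ cg hlam hμ0 hμl hcg0 hfun hcont_h hlip_h hbdg
  have hub : ∀ s, s₀ ≤ s →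
      |u s| ≤ (C₀ * E₀ / lam) / (lam - μ) * Real.exp (-lam * s) :=
    fun s hs => hubd (C₀ * E₀ / lam) s₀ (by positivity) hbd_s₀ s hs
  -- the profile
  refine ⟨fun s => Complex.exp (((-(θ s + u s) : ℝ) : ℂ) * Complex.I) * qi, ?_, ?_⟩
  · intro s _
    set p : ℝ → ℂ := fun s => Complex.exp (((-(θ s + u s) : ℝ) : ℂ) * Complex.I) * qi
      with hp_def
    have hΨ : HasDerivAt (fun s => -(θ s + u s)) (-(Φ (w s) + hfun s (u s))) s :=
      ((hθd s).add (hu' s)).neg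
    have h1 := ((hΨ.ofReal_comp).mul_const Complex.I).cexp.mul_const qi
    have hkey : Φ (w s) + hfun s (u s) = Φ (p s) := by
      simp only [hfun_def, hp_def]
      ring
    rw [hkey] at h1
    refine h1.congr_deriv ?_
    rw [hp_def]
    simp only
    push_cast
    ring
  · intro t ht
    have ht0 : 0 < t := lt_of_lt_of_le ht₀0 ht
    set s := Real.log t with hs_def
    have hs : s₀ ≤ s := Real.log_le_log ht₀0 ht
    have hexps : Real.exp s = t := Real.exp_log ht0
    have hzw : z t = w s := by rw [hw_eq s hs, hexps]
    set p : ℝ → ℂ := fun s => Complex.exp (((-(θ s + u s) : ℝ) : ℂ) * Complex.I) * qi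
      with hp_def
    set e1 := Complex.exp (((-θ s : ℝ) : ℂ) * Complex.I) with he1_def
    set e2 := Complex.exp (((-(θ s + u s) : ℝ) : ℂ) * Complex.I) with he2_def
    have hdecomp : z t - p s = e1 * (q s - qi) + (e1 - e2) * qi := by
      rw [hzw, hq_fact s, hp_def]
      ring
    have habs1 : ‖z t - p s‖
        ≤ ‖q s - qi‖ + |u s| * R := by
      rw [hdecomp]
      refine le_trans (norm_add_le _ _) ?_
      rw [norm_mul, norm_mul, he1_def, Complex.norm_exp_ofReal_mul_I, one_mul]
      have h2 := cexp_lip (-θ s) (-(θ s + u s))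
      rw [← he1_def, ← he2_def] at h2
      have h3 : |(-θ s) - (-(θ s + u s))| = |u s| := by
        rw [show (-θ s) - (-(θ s + u s)) = u s by ring]
      rw [h3] at h2
      have h4 : ‖e1 - e2‖ * ‖qi‖ ≤ |u s| * R := by
        rw [hR_def]
        exact mul_le_mul_of_nonneg_right h2 (norm_nonneg qi)
      linarith
    have hqs := hqinf s hs
    have hus := hub s hs
    have hchain : ‖z t - p s‖
        ≤ (E₀ / lam + R * ((C₀ * E₀ / lam) / (lam - μ))) * Real.exp (-lam * s) := by
      have hR0 : 0 ≤ R := norm_nonneg qi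
      have h5 : |u s| * R ≤ (C₀ * E₀ / lam) / (lam - μ) * Real.exp (-lam * s) * R :=
        mul_le_mul_of_nonneg_right hus hR0
      calc ‖z t - p s‖ ≤ ‖q s - qi‖ + |u s| * R := habs1
        _ ≤ E₀ / lam * Real.exp (-lam * s)
            + (C₀ * E₀ / lam) / (lam - μ) * Real.exp (-lam * s) * R := by linarith
        _ = (E₀ / lam + R * ((C₀ * E₀ / lam) / (lam - μ))) * Real.exp (-lam * s) := by ring
    have hlμ : (0:ℝ) < lam - μ := by linarith
    have hid : E₀ / lam + R * ((C₀ * E₀ / lam) / (lam - μ)) = E₀ / (lam - μ) := by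
      have hne : lam - C₀ * R ≠ 0 := hlμ.ne'
      rw [hμ_def]
      field_simp
      have hne2 : lam - R * C₀ ≠ 0 := by contrapose! hne; linarith
      rw [eq_div_iff hne2, add_mul, div_mul_cancel₀ _ hne2]
      ring
    have hDlam : lam ^ 2 - C₀ * (E₀ * t₀ ^ (-lam) + ‖z t₀‖ * lam)
        = lam * (lam - C₀ * A) := by
      rw [hA_def]
      field_simp
      ring
    have hfinal : E₀ / (lam - μ)
        ≤ E₀ * lam / (lam ^ 2 - C₀ * (E₀ * t₀ ^ (-lam) + ‖z t₀‖ * lam)) := by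
      rw [hDlam, div_le_div_iff₀ hlμ (mul_pos hlam (by linarith : (0:ℝ) < lam - C₀ * A))]
      have hstep : E₀ * lam * (lam - C₀ * A) ≤ E₀ * lam * (lam - μ) :=
        mul_le_mul_of_nonneg_left (by linarith) (by positivity)
      nlinarith [hstep]
    have htpow : (t : ℝ) ^ lam = Real.exp (lam * s) := by
      rw [Real.rpow_def_of_pos ht0, ← hs_def]
      ring_nf
    have hrhs : E₀ * lam /
        ((lam ^ 2 - C₀ * (E₀ * t₀ ^ (-lam) + ‖z t₀‖ * lam)) * t ^ lam)
        = (E₀ * lam / (lam ^ 2 - C₀ * (E₀ * t₀ ^ (-lam) + ‖z t₀‖ * lam)))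
          * Real.exp (-lam * s) := by
      rw [htpow, neg_mul, Real.exp_neg, div_mul_eq_div_div, div_eq_mul_inv]
    calc ‖z t - p s‖
        ≤ (E₀ / lam + R * ((C₀ * E₀ / lam) / (lam - μ))) * Real.exp (-lam * s) := hchain
      _ ≤ (E₀ * lam / (lam ^ 2 - C₀ * (E₀ * t₀ ^ (-lam) + ‖z t₀‖ * lam)))
            * Real.exp (-lam * s) := by
          refine mul_le_mul_of_nonneg_right ?_ (Real.exp_pos _).le
          rw [hid]
          exact hfinal
      _ = E₀ * lam /
          ((lam ^ 2 - C₀ * (E₀ * t₀ ^ (-lam) + ‖z t₀‖ * lam)) * t ^ lam) :=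
          hrhs.symm
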